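/- Let X and Y be Hilbert spaces, A ⊆ X an open set, K ⊆ A a compact set, and F : A → Y a C¹ map such that (1) F' : A → L_c(X,Y) is Lipschitz, i.e. ‖F'(x₁) − F'(x₂)‖_{X→Y} ≤ L ‖x₁ − x₂‖_X for all x₁, x₂ ∈ A and some L > 0, and (2) ‖x₁ − x₂‖_X ≤ C ‖F(x₁) − F(x₂)‖_Y for all x₁, x₂ ∈ A and some C > 0. Then there exist ρ, c, μ ∈ (0,1) such that for every x† ∈ K with y := F(x†) and every x₀ ∈ K with ‖x† − x₀‖_X < ρ, the Landweber iterates defined by x_{k+1} = x_k − μ F'(x_k)* (F(x_k) − y) remain in A, are well defined for all k ∈ ℕ, and satisfy ‖x† − x_k‖_X ≤ ρ c^k for every k ∈ ℕ; in particular x_k → x†. -/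

import Mathlib

open Filter Topology
set_option maxHeartbeats 1000000

/-- Proposition `prop:land`: local convergence of the Landweber
iteration for a `C¹` map with Lipschitz derivative and Lipschitz stability. -/
theorem landweber_local_convergence
    {X Y : Type*} [NormedAddCommGroup X] [InnerProductSpace ℝ X] [CompleteSpace X]
    [NormedAddCommGroup Y] [InnerProductSpace ℝ Y] [CompleteSpace Y]
    (A : Set X) (hA : IsOpen A) (K : Set X) (hKA : K ⊆ A) (hKcomp : IsCompact K)
    (F : X → Y) (F' : X → X →L[ℝ] Y)
    (hF : ∀ x ∈ A, HasFDerivAt F (F' x) x)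
    (hF'cont : ContinuousOn F' A)
    -- (1) F' is Lipschitz on A
    (L : ℝ) (hL : 0 < L)
    (hF'lip : ∀ x₁ ∈ A, ∀ x₂ ∈ A, ‖F' x₁ - F' x₂‖ ≤ L * ‖x₁ - x₂‖)
    -- (2) F⁻¹ is Lipschitz: stability estimate on A
    (C : ℝ) (hC : 0 < C)
    (hstab : ∀ x₁ ∈ A, ∀ x₂ ∈ A, ‖x₁ - x₂‖ ≤ C * ‖F x₁ - F x₂‖) :
    ∃ ρ ∈ Set.Ioo (0 : ℝ) 1, ∃ c ∈ Set.Ioo (0 : ℝ) 1, ∃ μ ∈ Set.Ioo (0 : ℝ) 1,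
      ∀ xdag ∈ K, ∀ x₀ ∈ K, ‖xdag - x₀‖ < ρ →
        ∃ x : ℕ → X,
          x 0 = x₀ ∧
          (∀ k, x k ∈ A) ∧
          (∀ k, x (k + 1) =
            x k - μ • (ContinuousLinearMap.adjoint (F' (x k))) (F (x k) - F xdag)) ∧
          (∀ k, ‖xdag - x k‖ ≤ ρ * c ^ k) ∧
          Tendsto x atTop (𝓝 xdag) := by
  classical
  obtain ⟨δ, hδpos, hδ⟩ := hKcomp.exists_thickening_subset_open hA hKA
  obtain ⟨M₀, hM₀⟩ := hKcomp.exists_bound_of_continuousOn (hF'cont.mono hKA)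
  set M : ℝ := max M₀ 0 + L + 1 with hMdef
  have hM1 : 1 ≤ M := by
    have := le_max_right M₀ 0
    nlinarith
  have hMpos : 0 < M := lt_of_lt_of_le one_pos hM1
  set ρ : ℝ := min (min (δ / 2) (1 / 2)) (1 / (4 * L * C)) with hρdef
  have hρpos : 0 < ρ := by
    apply lt_min (lt_min (by linarith) (by norm_num))
    positivity
  have hρhalf : ρ ≤ 1 / 2 := le_trans (min_le_left _ _) (min_le_right _ _)
  have hρlt1 : ρ < 1 := lt_of_le_of_lt hρhalf (by norm_num)
  have hρδ : ρ < δ := lt_of_le_of_lt (le_trans (min_le_left _ _) (min_le_left _ _))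
    (by linarith)
  have hρLC : 2 * L * ρ * C ≤ 1 / 2 := by
    have h1 : ρ ≤ 1 / (4 * L * C) := min_le_right _ _
    have h2 : 0 < 4 * L * C := by positivity
    rw [le_div_iff₀ h2] at h1
    nlinarith
  set μ : ℝ := min (min (1 / 2) (1 / (2 * M ^ 2))) (C ^ 2) with hμdef
  have hμpos : 0 < μ := by
    apply lt_min (lt_min (by norm_num) (by positivity))
    positivity
  have hμhalf : μ ≤ 1 / 2 := le_trans (min_le_left _ _) (min_le_left _ _)
  have hμlt1 : μ < 1 := lt_of_le_of_lt hμhalf (by norm_num)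
  have hμM : μ * M ^ 2 ≤ 1 / 2 := by
    have h1 : μ ≤ 1 / (2 * M ^ 2) := le_trans (min_le_left _ _) (min_le_right _ _)
    have h2 : 0 < 2 * M ^ 2 := by positivity
    rw [le_div_iff₀ h2] at h1
    nlinarith
  have hμC : μ ≤ C ^ 2 := min_le_right _ _
  have harg : 0 < 1 - μ / (2 * C ^ 2) := by
    have h2 : 0 < 2 * C ^ 2 := by positivity
    rw [sub_pos, div_lt_iff₀ h2]
    nlinarith
  set c : ℝ := Real.sqrt (1 - μ / (2 * C ^ 2)) with hcdef
  have hc2 : c ^ 2 = 1 - μ / (2 * C ^ 2) := Real.sq_sqrt harg.le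
  have hcpos : 0 < c := Real.sqrt_pos.2 harg
  have hclt1 : c < 1 := by
    have h2 : 0 < 2 * C ^ 2 := by positivity
    have : c ^ 2 < 1 := by
      rw [hc2, sub_lt_self_iff]
      positivity
    nlinarith
  have hMge : M₀ + L ≤ M := by
    have := le_max_left M₀ (0 : ℝ)
    rw [hMdef]; linarith
  clear_value M ρ μ c
  clear hMdef hρdef hμdef hcdef
  refine ⟨ρ, ⟨hρpos, hρlt1⟩, c, ⟨hcpos, hclt1⟩, μ, ⟨hμpos, hμlt1⟩, ?_⟩
  intro xdag hxdagK x₀ hx₀K hx₀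
  have hxdagA : xdag ∈ A := hKA hxdagK
  have hballA : ∀ z : X, ‖xdag - z‖ ≤ ρ → z ∈ A := by
    intro z hz
    apply hδ
    apply Metric.ball_subset_thickening hxdagK δ
    rw [Metric.mem_ball, dist_eq_norm, ← norm_sub_rev]
    exact lt_of_le_of_lt hz hρδ
  -- key contraction estimate
  have key : ∀ z : X, ‖xdag - z‖ ≤ ρ →
      ‖xdag - (z - μ • (ContinuousLinearMap.adjoint (F' z)) (F z - F xdag))‖
        ≤ c * ‖xdag - z‖ := by
    intro z hz
    have hzA : z ∈ A := hballA z hz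
    set T := ContinuousLinearMap.adjoint (F' z) with hT
    set r : Y := F z - F xdag with hrdef
    set e : X := xdag - z with hedef
    -- work on the closed ball
    set s := Metric.closedBall xdag ρ with hsdef
    clear_value T r e
    have hz2 : ‖xdag - z‖ ≤ ρ := by rw [← hedef]; exact hz
    have hsA : ∀ w ∈ s, w ∈ A := by
      intro w hw
      rw [hsdef, Metric.mem_closedBall] at hw
      apply hballA
      rw [norm_sub_rev, ← dist_eq_norm]
      exact hw
    have hzs : z ∈ s := by
      rw [hsdef, Metric.mem_closedBall, dist_eq_norm, norm_sub_rev]; exact hz2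
    have hxs : xdag ∈ s := by rw [hsdef]; exact Metric.mem_closedBall_self hρpos.le
    have hds : ∀ w ∈ s, HasFDerivWithinAt F (F' w) s w := fun w hw =>
      (hF w (hsA w hw)).hasFDerivWithinAt
    have hbd1 : ∀ w ∈ s, ‖F' w - F' z‖ ≤ 2 * L * ρ := by
      intro w hw
      have h1 := hF'lip w (hsA w hw) z hzA
      have hwz : ‖w - z‖ ≤ 2 * ρ := by
        have h2 : dist w xdag ≤ ρ := Metric.mem_closedBall.1 (hsdef ▸ hw)
        have h3 : dist z xdag ≤ ρ := Metric.mem_closedBall.1 (hsdef ▸ hzs)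
        calc ‖w - z‖ = dist w z := (dist_eq_norm _ _).symm
          _ ≤ dist w xdag + dist xdag z := dist_triangle _ _ _
          _ ≤ ρ + ρ := add_le_add h2 (by rw [dist_comm]; exact h3)
          _ = 2 * ρ := by ring
      nlinarith
    have hconv : Convex ℝ s := hsdef ▸ convex_closedBall _ _
    have hR : ‖F xdag - F z - (F' z) (xdag - z)‖ ≤ (2 * L * ρ) * ‖xdag - z‖ :=
      hconv.norm_image_sub_le_of_norm_hasFDerivWithin_le' hds hbd1 hzs hxs
    have hstabz : ‖e‖ ≤ C * ‖r‖ := by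
      have h1 := hstab xdag hxdagA z hzA
      rw [hedef, hrdef, norm_sub_rev (F z)]
      exact h1
    have hFz : ‖F' z‖ ≤ M := by
      have h1 : ‖F' xdag‖ ≤ M₀ := hM₀ xdag hxdagK
      have h2 : ‖F' z - F' xdag‖ ≤ L * ‖z - xdag‖ := hF'lip z hzA xdag hxdagA
      have h3 : ‖z - xdag‖ ≤ 1 := by
        rw [norm_sub_rev]; linarith
      have h4 : ‖F' z‖ - ‖F' xdag‖ ≤ ‖F' z - F' xdag‖ := norm_sub_norm_le (F' z) (F' xdag)
      nlinarith
    have hTr : ‖T r‖ ≤ M * ‖r‖ := by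
      have h1 : ‖T‖ = ‖F' z‖ := by
        rw [hT]; exact ContinuousLinearMap.adjoint.norm_map (F' z)
      calc ‖T r‖ ≤ ‖T‖ * ‖r‖ := T.le_opNorm r
        _ ≤ M * ‖r‖ := by rw [h1]; exact mul_le_mul_of_nonneg_right hFz (norm_nonneg r)
    -- inner product estimate
    have hinner : (inner ℝ e (T r) : ℝ) ≤ -(1 / 2) * ‖r‖ ^ 2 := by
      have h1 : (inner ℝ e (T r) : ℝ) = inner ℝ ((F' z) e) r := by
        rw [real_inner_comm, hT, ContinuousLinearMap.adjoint_inner_left, real_inner_comm]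
      set R : Y := F xdag - F z - (F' z) e with hRdef
      have h2 : (F' z) e = -r - R := by
        rw [hRdef, hrdef]; abel
      have h3 : (inner ℝ ((F' z) e) r : ℝ) = -‖r‖ ^ 2 - inner ℝ R r := by
        rw [h2, inner_sub_left, inner_neg_left, real_inner_self_eq_norm_sq]
      have h4 : |(inner ℝ R r : ℝ)| ≤ ‖R‖ * ‖r‖ := abs_real_inner_le_norm R r
      have h5 : ‖R‖ ≤ (2 * L * ρ) * ‖e‖ := by rw [hRdef, hedef]; exact hR
      have h6 : -(inner ℝ R r : ℝ) ≤ ‖R‖ * ‖r‖ := by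
        have := neg_abs_le (inner ℝ R r : ℝ)
        linarith
      have h7 : ‖R‖ * ‖r‖ ≤ (2 * L * ρ) * (C * ‖r‖) * ‖r‖ := by
        have hrnn : (0 : ℝ) ≤ ‖r‖ := norm_nonneg r
        have h9 : (0 : ℝ) ≤ 2 * L * ρ := by positivity
        have h8 : ‖R‖ ≤ (2 * L * ρ) * (C * ‖r‖) :=
          h5.trans (mul_le_mul_of_nonneg_left hstabz h9)
        exact mul_le_mul_of_nonneg_right h8 hrnn
      rw [h1, h3]
      have hrnn : (0 : ℝ) ≤ ‖r‖ := norm_nonneg r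
      have h10 := mul_le_mul_of_nonneg_right hρLC (mul_self_nonneg ‖r‖)
      nlinarith [h6, h7, h10]
    -- putting together
    have hgoal : xdag - (z - μ • T r) = e + μ • T r := by
      rw [hedef]; abel
    rw [hgoal]
    have hsq : ‖e + μ • T r‖ ^ 2 ≤ (c * ‖e‖) ^ 2 := by
      have h1 : ‖e + μ • T r‖ ^ 2 = ‖e‖ ^ 2 + 2 * (inner ℝ e (μ • T r) : ℝ) + ‖μ • T r‖ ^ 2 :=
        norm_add_sq_real e (μ • T r)
      have h2 : (inner ℝ e (μ • T r) : ℝ) = μ * inner ℝ e (T r) := real_inner_smul_right e (T r) μ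
      have h3 : ‖μ • T r‖ = μ * ‖T r‖ := by
        rw [norm_smul, Real.norm_eq_abs, abs_of_pos hμpos]
      have hrnn : (0 : ℝ) ≤ ‖r‖ := norm_nonneg r
      have hTrnn : (0 : ℝ) ≤ ‖T r‖ := norm_nonneg _
      have h4 : ‖μ • T r‖ ^ 2 ≤ μ ^ 2 * M ^ 2 * ‖r‖ ^ 2 := by
        rw [h3]
        have h4a := mul_le_mul hTr hTr hTrnn (mul_nonneg hMpos.le hrnn)
        have h4b := mul_le_mul_of_nonneg_left h4a (sq_nonneg μ)
        nlinarith [h4b]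
      have h5 : ‖e + μ • T r‖ ^ 2 ≤ ‖e‖ ^ 2 - μ * ‖r‖ ^ 2 + μ ^ 2 * M ^ 2 * ‖r‖ ^ 2 := by
        rw [h1, h2]
        have h5a := mul_le_mul_of_nonneg_left hinner hμpos.le
        linarith [h4, h5a]
      have h6 : μ ^ 2 * M ^ 2 * ‖r‖ ^ 2 ≤ (μ / 2) * ‖r‖ ^ 2 := by
        have h6a := mul_le_mul_of_nonneg_right (mul_le_mul_of_nonneg_left hμM hμpos.le)
          (sq_nonneg ‖r‖)
        linarith [h6a]
      have h7 : ‖e + μ • T r‖ ^ 2 ≤ ‖e‖ ^ 2 - (μ / 2) * ‖r‖ ^ 2 := by linarith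
      have h8 : ‖e‖ ^ 2 ≤ C ^ 2 * ‖r‖ ^ 2 := by
        have h8a := mul_self_le_mul_self (norm_nonneg e) hstabz
        linarith [h8a]
      have h9 : (μ / 2) * (‖e‖ ^ 2 / C ^ 2) ≤ (μ / 2) * ‖r‖ ^ 2 := by
        apply mul_le_mul_of_nonneg_left _ (by positivity)
        rw [div_le_iff₀ (by positivity : (0:ℝ) < C ^ 2)]
        linarith [h8]
      have h10 : (c * ‖e‖) ^ 2 = (1 - μ / (2 * C ^ 2)) * ‖e‖ ^ 2 := by
        rw [mul_pow, hc2]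
      rw [h10]
      have hCC : (0 : ℝ) < C ^ 2 := by positivity
      have h11 : (1 - μ / (2 * C ^ 2)) * ‖e‖ ^ 2
          = ‖e‖ ^ 2 - (μ / 2) * (‖e‖ ^ 2 / C ^ 2) := by
        field_simp
      rw [h11]
      linarith
    have h12 : (0 : ℝ) ≤ c * ‖e‖ := by positivity
    calc ‖e + μ • T r‖ = Real.sqrt (‖e + μ • T r‖ ^ 2) :=
          (Real.sqrt_sq (norm_nonneg _)).symm
      _ ≤ Real.sqrt ((c * ‖e‖) ^ 2) := Real.sqrt_le_sqrt hsq
      _ = c * ‖e‖ := Real.sqrt_sq h12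
  -- the sequence
  obtain ⟨x, hx0, hxsucc⟩ :
      ∃ x : ℕ → X, x 0 = x₀ ∧ ∀ k, x (k + 1) =
        x k - μ • (ContinuousLinearMap.adjoint (F' (x k))) (F (x k) - F xdag) :=
    ⟨fun k => Nat.rec x₀
      (fun _ xk => xk - μ • (ContinuousLinearMap.adjoint (F' xk)) (F xk - F xdag)) k,
      rfl, fun _ => rfl⟩
  have hbound : ∀ k, ‖xdag - x k‖ ≤ ρ * c ^ k := by
    intro k
    induction k with
    | zero => rw [hx0]; simpa using hx₀.le
    | succ k ih =>
      have hck : c ^ k ≤ 1 := pow_le_one₀ hcpos.le hclt1.le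
      have h1 : ‖xdag - x k‖ ≤ ρ := ih.trans (by
        have := mul_le_mul_of_nonneg_left hck hρpos.le
        linarith)
      calc ‖xdag - x (k + 1)‖ ≤ c * ‖xdag - x k‖ := by rw [hxsucc k]; exact key (x k) h1
        _ ≤ c * (ρ * c ^ k) := mul_le_mul_of_nonneg_left ih hcpos.le
        _ = ρ * c ^ (k + 1) := by ring
  have hmemA : ∀ k, x k ∈ A := by
    intro k
    apply hballA
    have hck : c ^ k ≤ 1 := pow_le_one₀ hcpos.le hclt1.le
    have h1 := mul_le_mul_of_nonneg_left hck hρpos.le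
    linarith [hbound k]
  refine ⟨x, hx0, hmemA, hxsucc, hbound, ?_⟩
  rw [tendsto_iff_dist_tendsto_zero]
  have hdist : ∀ k : ℕ, dist (x k) xdag ≤ ρ * c ^ k := by
    intro k; rw [dist_eq_norm, norm_sub_rev]; exact hbound k
  have hlim : Tendsto (fun k : ℕ => ρ * c ^ k) atTop (𝓝 0) := by
    have h1 : Tendsto (fun k : ℕ => c ^ k) atTop (𝓝 0) :=
      tendsto_pow_atTop_nhds_zero_of_lt_one hcpos.le hclt1
    simpa using h1.const_mul ρ
  exact squeeze_zero (fun k => dist_nonneg) hdist hlim
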